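/- Let 0 ≤ β ≤ α < 1 with α > 0. Then c_α · ∫_0^1 (1−(1−s)^α)·β s^{−β−1} ds + c_α = c_α · ∫_0^1 (1−s)^{−β} α s^{α−1} ds = 1/((1−β)·B(1−α, 1+α−β)), where c_α = 1/(Γ(1−α)Γ(1+α)) and B is the Beta function. (For β = 0 the first integral is interpreted as 0.) -/

import Mathlib

open MeasureTheory Real Set Filter

/-- Bernoulli-type tangent line inequality for concave rpow. -/
lemma aux_bern {a t : ℝ} (ha0 : 0 ≤ a) (ha1 : a ≤ 1) (ht0 : 0 < t) :
    1 - t ^ a ≤ a * (t ^ (a - 1) * (1 - t)) := by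
  have hu : (-1:ℝ) ≤ (1 - t) / t := by
    rw [le_div_iff₀ ht0]; linarith
  have hB := rpow_one_add_le_one_add_mul_self hu ha0 ha1
  have h1 : (1:ℝ) + (1 - t) / t = 1 / t := by field_simp; ring
  rw [h1] at hB
  have hmul := mul_le_mul_of_nonneg_right hB (Real.rpow_pos_of_pos ht0 a).le
  rw [← Real.mul_rpow (by positivity) ht0.le, one_div_mul_cancel ht0.ne',
    Real.one_rpow] at hmul
  have h2 : (1 + a * ((1 - t) / t)) * t ^ a = t ^ a + a * (t ^ (a - 1) * (1 - t)) := by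
    rw [Real.rpow_sub ht0, Real.rpow_one]
    field_simp
  rw [h2] at hmul
  linarith

/-- Real beta integrand is integrable on `(0,1)`. -/
lemma aux_beta_integrable (a b : ℝ) (ha : 0 < a) (hb : 0 < b) :
    IntegrableOn (fun s : ℝ => s ^ (a - 1) * (1 - s) ^ (b - 1)) (Set.Ioo 0 1) := by
  have h := Complex.betaIntegral_convergent (u := (a : ℂ)) (v := (b : ℂ))
    (by simpa using ha) (by simpa using hb)
  rw [intervalIntegrable_iff_integrableOn_Ioc_of_le zero_le_one] at h
  have h2 := (h.mono_set Set.Ioo_subset_Ioc_self).re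
  refine MeasureTheory.IntegrableOn.congr_fun h2 ?_ measurableSet_Ioo
  intro x hx
  have hx0 : (0:ℝ) ≤ x := hx.1.le
  have hx1 : (0:ℝ) ≤ 1 - x := by linarith [hx.2]
  show RCLike.re ((x:ℂ) ^ ((a:ℂ) - 1) * (1 - (x:ℂ)) ^ ((b:ℂ) - 1)) = x ^ (a - 1) * (1 - x) ^ (b - 1)
  have e1 : ((x:ℂ) ^ ((a:ℂ) - 1) * (1 - (x:ℂ)) ^ ((b:ℂ) - 1))
      = ((x ^ (a - 1) * (1 - x) ^ (b - 1) : ℝ) : ℂ) := by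
    rw [show ((a:ℂ) - 1) = ((a - 1 : ℝ) : ℂ) by push_cast; ring,
      show ((b:ℂ) - 1) = ((b - 1 : ℝ) : ℂ) by push_cast; ring,
      show (1 - (x:ℂ)) = ((1 - x : ℝ) : ℂ) by push_cast; ring,
      ← Complex.ofReal_cpow hx0, ← Complex.ofReal_cpow hx1, ← Complex.ofReal_mul]
  rw [e1]
  simp

/-- Real beta integral evaluation on `(0,1)`. -/
lemma aux_beta_eval (a b : ℝ) (ha : 0 < a) (hb : 0 < b) :
    ∫ s in Set.Ioo (0:ℝ) 1, s ^ (a - 1) * (1 - s) ^ (b - 1)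
      = Real.Gamma a * Real.Gamma b / Real.Gamma (a + b) := by
  have key := Complex.Gamma_mul_Gamma_eq_betaIntegral (s := (a:ℂ)) (t := (b:ℂ))
    (by simpa using ha) (by simpa using hb)
  have hIov : Complex.betaIntegral (a:ℂ) (b:ℂ)
      = ((∫ s in Set.Ioo (0:ℝ) 1, s ^ (a - 1) * (1 - s) ^ (b - 1) : ℝ) : ℂ) := by
    rw [Complex.betaIntegral]
    have hcongr : (∫ x : ℝ in (0:ℝ)..1, (x:ℂ) ^ ((a:ℂ) - 1) * (1 - (x:ℂ)) ^ ((b:ℂ) - 1))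
        = ∫ x : ℝ in (0:ℝ)..1, ((x ^ (a - 1) * (1 - x) ^ (b - 1) : ℝ) : ℂ) := by
      apply intervalIntegral.integral_congr
      intro x hx
      rw [Set.uIcc_of_le zero_le_one] at hx
      have hx0 : (0:ℝ) ≤ x := hx.1
      have hx1 : (0:ℝ) ≤ 1 - x := by linarith [hx.2]
      simp only
      rw [show ((a:ℂ) - 1) = ((a - 1 : ℝ) : ℂ) by push_cast; ring,
        show ((b:ℂ) - 1) = ((b - 1 : ℝ) : ℂ) by push_cast; ring,
        show (1 - (x:ℂ)) = ((1 - x : ℝ) : ℂ) by push_cast; ring,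
        ← Complex.ofReal_cpow hx0, ← Complex.ofReal_cpow hx1, ← Complex.ofReal_mul]
    rw [hcongr, intervalIntegral.integral_ofReal,
      intervalIntegral.integral_of_le zero_le_one, integral_Ioc_eq_integral_Ioo]
  rw [hIov, show ((a:ℂ) + (b:ℂ)) = ((a + b : ℝ) : ℂ) by push_cast; ring,
    Complex.Gamma_ofReal, Complex.Gamma_ofReal, Complex.Gamma_ofReal,
    ← Complex.ofReal_mul, ← Complex.ofReal_mul, Complex.ofReal_inj] at key
  have hG : Real.Gamma (a + b) ≠ 0 := (Real.Gamma_pos_of_pos (by linarith)).ne'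
  field_simp
  linarith [key]

/-- **First moment of `Z_{α,β}`.**
For `0 ≤ β ≤ α < 1` with `α > 0`, with `c_α = 1/(Γ(1−α)Γ(1+α))` and
`B(a,b) = Γ(a)Γ(b)/Γ(a+b)`,
`c_α ∫_0^1 (1−(1−s)^α) β s^{−β−1} ds + c_α = c_α ∫_0^1 (1−s)^{−β} α s^{α−1} ds
  = 1/((1−β)·B(1−α, 1+α−β))`. -/
theorem first_moment_Z_alpha_beta
    (α β : ℝ) (hα0 : 0 < α) (hα1 : α < 1) (hβ0 : 0 ≤ β) (hβα : β ≤ α)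
    (cα : ℝ) (hcα : cα = 1 / (Real.Gamma (1 - α) * Real.Gamma (1 + α)))
    (B : ℝ → ℝ → ℝ)
    (hB : ∀ a b, B a b = Real.Gamma a * Real.Gamma b / Real.Gamma (a + b)) :
    cα * (∫ s in Set.Ioo (0:ℝ) 1, (1 - (1 - s) ^ α) * (β * s ^ (-β - 1))) + cα
        = cα * ∫ s in Set.Ioo (0:ℝ) 1, (1 - s) ^ (-β) * (α * s ^ (α - 1)) ∧
      cα * (∫ s in Set.Ioo (0:ℝ) 1, (1 - s) ^ (-β) * (α * s ^ (α - 1)))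
        = 1 / ((1 - β) * B (1 - α) (1 + α - β)) := by
  have hβ1 : β < 1 := lt_of_le_of_lt hβα hα1
  have h1β : (0:ℝ) < 1 - β := by linarith
  -- the reflected beta integrand
  have hbint : IntegrableOn (fun s : ℝ => s ^ (-β) * (1 - s) ^ (α - 1)) (Set.Ioo 0 1) := by
    have := aux_beta_integrable (1 - β) α h1β hα0
    simpa only [show (1 - β - 1 : ℝ) = -β by ring] using this
  have hbval : ∫ s in Set.Ioo (0:ℝ) 1, s ^ (-β) * (1 - s) ^ (α - 1)
      = Real.Gamma (1 - β) * Real.Gamma α / Real.Gamma (1 + α - β) := by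
    have := aux_beta_eval (1 - β) α h1β hα0
    simpa only [show (1 - β - 1 : ℝ) = -β by ring,
      show (1 - β + α : ℝ) = 1 + α - β by ring] using this
  -- value of the second integral
  have hI2 : (∫ s in Set.Ioo (0:ℝ) 1, (1 - s) ^ (-β) * (α * s ^ (α - 1)))
      = α * (Real.Gamma α * Real.Gamma (1 - β) / Real.Gamma (1 + α - β)) := by
    have hfun : (fun s : ℝ => (1 - s) ^ (-β) * (α * s ^ (α - 1)))
        = fun s : ℝ => α * (s ^ (α - 1) * (1 - s) ^ (1 - β - 1)) := by
      funext s
      rw [show (1 - β - 1 : ℝ) = -β by ring]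
      ring
    rw [hfun, MeasureTheory.integral_const_mul, aux_beta_eval α (1 - β) hα0 h1β,
      show (α + (1 - β) : ℝ) = 1 + α - β by ring]
  -- integrability of the first integrand
  have hf1int : IntegrableOn (fun s : ℝ => (1 - (1 - s) ^ α) * (β * s ^ (-β - 1)))
      (Set.Ioo 0 1) := by
    refine Integrable.mono' ((hbint.const_mul (α * β)))
      ?_ ?_
    · exact (show Measurable fun s : ℝ => (1 - (1 - s) ^ α) * (β * s ^ (-β - 1))
        by fun_prop).aestronglyMeasurable
    · filter_upwards [ae_restrict_mem measurableSet_Ioo] with s hs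
      have hs0 : (0:ℝ) < s := hs.1
      have hs1 : (0:ℝ) < 1 - s := by linarith [hs.2]
      have hb1 : (1 - s) ^ α ≤ 1 := Real.rpow_le_one hs1.le (by linarith) hα0.le
      have hnn : 0 ≤ (1 - (1 - s) ^ α) * (β * s ^ (-β - 1)) :=
        mul_nonneg (by linarith) (mul_nonneg hβ0 (Real.rpow_nonneg hs0.le _))
      rw [Real.norm_eq_abs, abs_of_nonneg hnn]
      have hkey := aux_bern hα0.le hα1.le hs1
      have hss := Real.rpow_add hs0 1 (-β - 1)
      rw [show (1 + (-β - 1) : ℝ) = -β by ring, Real.rpow_one] at hss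
      calc (1 - (1 - s) ^ α) * (β * s ^ (-β - 1))
          ≤ (α * ((1 - s) ^ (α - 1) * s)) * (β * s ^ (-β - 1)) := by
            apply mul_le_mul_of_nonneg_right _ (mul_nonneg hβ0 (Real.rpow_nonneg hs0.le _))
            simpa [show (1:ℝ) - (1 - s) = s by ring] using hkey
        _ = α * β * (s ^ (-β) * (1 - s) ^ (α - 1)) := by rw [hss]; ring
  -- FTC part : derivative of H(s) = -((1-(1-s)^α) s^(-β))
  set H : ℝ → ℝ := fun s => -((1 - (1 - s) ^ α) * s ^ (-β)) with hH
  have hderiv : ∀ s ∈ Set.Ioo (0:ℝ) 1, HasDerivAt H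
      ((1 - (1 - s) ^ α) * (β * s ^ (-β - 1)) - α * (s ^ (-β) * (1 - s) ^ (α - 1))) s := by
    intro s hs
    have hs0 : (0:ℝ) < s := hs.1
    have hs1 : (0:ℝ) < 1 - s := by linarith [hs.2]
    have hinner : HasDerivAt (fun s : ℝ => 1 - s) (-1) s := by
      simpa using (hasDerivAt_id s).const_sub 1
    have hpow : HasDerivAt (fun s : ℝ => (1 - s) ^ α) (-1 * α * (1 - s) ^ (α - 1)) s :=
      HasDerivAt.rpow_const hinner (Or.inl hs1.ne')
    have hu : HasDerivAt (fun s : ℝ => 1 - (1 - s) ^ α) (α * (1 - s) ^ (α - 1)) s := by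
      have := hpow.const_sub 1
      exact this.congr_deriv (by ring)
    have hv : HasDerivAt (fun s : ℝ => s ^ (-β)) (-β * s ^ (-β - 1)) s :=
      Real.hasDerivAt_rpow_const (Or.inl hs0.ne')
    have := (hu.mul hv).neg
    exact this.congr_deriv (by ring)
  have hint : IntervalIntegrable (fun s : ℝ =>
      (1 - (1 - s) ^ α) * (β * s ^ (-β - 1)) - α * (s ^ (-β) * (1 - s) ^ (α - 1)))
      volume 0 1 := by
    rw [intervalIntegrable_iff_integrableOn_Ioo_of_le zero_le_one]
    exact hf1int.sub (hbint.const_mul α)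
  -- limit of H at 1⁻
  have hlim1 : Tendsto H (nhdsWithin 1 (Set.Iio 1)) (nhds (-1)) := by
    have hc1 : ContinuousAt H 1 := by
      apply ContinuousAt.neg
      apply ContinuousAt.mul
      · apply ContinuousAt.sub continuousAt_const
        have h0 : ContinuousAt (fun x : ℝ => x ^ α) ((1:ℝ) - 1) := by
          rw [sub_self]
          exact Real.continuousAt_rpow_const 0 α (Or.inr hα0.le)
        exact h0.comp (continuousAt_const.sub continuousAt_id)
      · exact Real.continuousAt_rpow_const 1 (-β) (Or.inl one_ne_zero)
    have hval : H 1 = -1 := by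
      simp [hH, Real.zero_rpow hα0.ne', Real.one_rpow]
    have := hc1.tendsto
    rw [hval] at this
    exact this.mono_left nhdsWithin_le_nhds
  -- limit of H at 0⁺
  have hlim0 : Tendsto H (nhdsWithin 0 (Set.Ioi 0)) (nhds 0) := by
    apply squeeze_zero_norm' (a := fun s : ℝ => α * ((1 - s) ^ (α - 1) * s ^ (1 - β)))
    · filter_upwards [Ioo_mem_nhdsGT_of_mem (Set.mem_Ico.2 ⟨le_refl (0:ℝ), zero_lt_one⟩)]
        with s hs
      have hs0 : (0:ℝ) < s := hs.1
      have hs1 : (0:ℝ) < 1 - s := by linarith [hs.2]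
      have hb1 : (1 - s) ^ α ≤ 1 := Real.rpow_le_one hs1.le (by linarith) hα0.le
      have hnn : 0 ≤ (1 - (1 - s) ^ α) * s ^ (-β) :=
        mul_nonneg (by linarith) (Real.rpow_nonneg hs0.le _)
      have hnorm : ‖H s‖ = (1 - (1 - s) ^ α) * s ^ (-β) := by
        rw [hH]
        simp only [norm_neg, Real.norm_eq_abs]
        exact abs_of_nonneg hnn
      rw [hnorm]
      have hkey := aux_bern hα0.le hα1.le hs1
      have hss := Real.rpow_add hs0 1 (-β)
      rw [show (1 + -β : ℝ) = 1 - β by ring, Real.rpow_one] at hss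
      calc (1 - (1 - s) ^ α) * s ^ (-β)
          ≤ (α * ((1 - s) ^ (α - 1) * s)) * s ^ (-β) := by
            apply mul_le_mul_of_nonneg_right _ (Real.rpow_nonneg hs0.le _)
            simpa [show (1:ℝ) - (1 - s) = s by ring] using hkey
        _ = α * ((1 - s) ^ (α - 1) * s ^ (1 - β)) := by rw [hss]; ring
    · have hc : ContinuousAt (fun s : ℝ => α * ((1 - s) ^ (α - 1) * s ^ (1 - β))) 0 := by
        apply ContinuousAt.mul continuousAt_const
        apply ContinuousAt.mul
        · have h0 : ContinuousAt (fun x : ℝ => x ^ (α - 1)) ((1:ℝ) - 0) := by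
            rw [sub_zero]
            exact Real.continuousAt_rpow_const 1 (α - 1) (Or.inl one_ne_zero)
          exact h0.comp (continuousAt_const.sub continuousAt_id)
        · exact Real.continuousAt_rpow_const 0 (1 - β) (Or.inr h1β.le)
      have hval : α * ((1 - (0:ℝ)) ^ (α - 1) * (0:ℝ) ^ (1 - β)) = 0 := by
        rw [Real.zero_rpow h1β.ne']
        ring
      have := hc.tendsto
      rw [hval] at this
      exact this.mono_left nhdsWithin_le_nhds
  have hFTC := intervalIntegral.integral_eq_sub_of_hasDerivAt_of_tendsto zero_lt_one
    hderiv hint hlim0 hlim1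
  rw [intervalIntegral.integral_of_le zero_le_one, integral_Ioc_eq_integral_Ioo,
    MeasureTheory.integral_sub hf1int (hbint.const_mul α),
    MeasureTheory.integral_const_mul, hbval] at hFTC
  -- hFTC : ∫ f1 - α * (Γ(1-β)Γα/Γ(1+α-β)) = -1 - 0
  have hI1 : (∫ s in Set.Ioo (0:ℝ) 1, (1 - (1 - s) ^ α) * (β * s ^ (-β - 1)))
      = α * (Real.Gamma (1 - β) * Real.Gamma α / Real.Gamma (1 + α - β)) - 1 := by
    linarith [hFTC]
  constructor
  · rw [hI1, hI2]
    ring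
  · rw [hI2, hcα, hB]
    have hGa : Real.Gamma (1 + α) = α * Real.Gamma α := by
      rw [add_comm, Real.Gamma_add_one hα0.ne']
    have hsum : (1 - α) + (1 + α - β) = (1 - β) + 1 := by ring
    have hGb : Real.Gamma ((1 - α) + (1 + α - β)) = (1 - β) * Real.Gamma (1 - β) := by
      rw [hsum, Real.Gamma_add_one h1β.ne']
    rw [hGa, hGb]
    have g1 : Real.Gamma (1 - α) ≠ 0 := (Real.Gamma_pos_of_pos (by linarith)).ne'
    have g2 : Real.Gamma α ≠ 0 := (Real.Gamma_pos_of_pos hα0).ne'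
    have g3 : Real.Gamma (1 - β) ≠ 0 := (Real.Gamma_pos_of_pos h1β).ne'
    have g4 : Real.Gamma (1 + α - β) ≠ 0 := (Real.Gamma_pos_of_pos (by linarith)).ne'
    field_simp
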